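/- arXiv:2204.12328 — 2 statements merged into one kernel-verified Lean document; each statement's English description precedes it below -/
import Mathlib

section
/- Let $\omega \geq 1$ and $\sigma_\omega(s) = 1 + s/\sqrt{\omega}$ on $[-\sqrt{\omega},\infty)$. For every absolutely continuous function $v : [-\sqrt{\omega},\infty) \to \mathbb{R}$ with $v, v' \in L^2(\sigma_\omega\, ds)$, there is a universal constant $C > 0$ (independent of $\omega$) such that $\sup_{s > -\sqrt{\omega}} \sigma_\omega(s)\, |v(s)|^2 \leq C \|v\|_{L^2(\sigma_\omega ds)} \|v'\|_{L^2(\sigma_\omega ds)}$. -/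
open Real MeasureTheory Set

lemma cs_aux {α : Type*} [MeasurableSpace α] {μ : Measure α} {f g : α → ℝ}
    (hf2 : Integrable (fun t => f t ^ 2) μ) (hg2 : Integrable (fun t => g t ^ 2) μ)
    (hfg : Integrable (fun t => f t * g t) μ) :
    ∫ t, f t * g t ∂μ ≤ Real.sqrt (∫ t, f t ^ 2 ∂μ) * Real.sqrt (∫ t, g t ^ 2 ∂μ) := by
  set A := ∫ t, f t ^ 2 ∂μ with hA
  set B := ∫ t, g t ^ 2 ∂μ with hB
  have hA0 : 0 ≤ A := integral_nonneg fun t => sq_nonneg _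
  have hB0 : 0 ≤ B := integral_nonneg fun t => sq_nonneg _
  by_cases hAz : A = 0
  · have hf0 : (fun t => f t ^ 2) =ᵐ[μ] 0 :=
      (integral_eq_zero_iff_of_nonneg (fun t => sq_nonneg _) hf2).mp hAz
    have hz : (fun t => f t * g t) =ᵐ[μ] 0 := by
      filter_upwards [hf0] with t ht
      have : f t ^ 2 = 0 := ht
      have hft : f t = 0 := by nlinarith [sq_nonneg (f t)]
      simp [hft]
    rw [integral_congr_ae hz]
    simp only [Pi.zero_apply, integral_zero]
    positivity
  · by_cases hBz : B = 0
    · have hg0 : (fun t => g t ^ 2) =ᵐ[μ] 0 :=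
        (integral_eq_zero_iff_of_nonneg (fun t => sq_nonneg _) hg2).mp hBz
      have hz : (fun t => f t * g t) =ᵐ[μ] 0 := by
        filter_upwards [hg0] with t ht
        have : g t ^ 2 = 0 := ht
        have hgt : g t = 0 := by nlinarith [sq_nonneg (g t)]
        simp [hgt]
      rw [integral_congr_ae hz]
      simp only [Pi.zero_apply, integral_zero]
      positivity
    · have hApos : 0 < A := lt_of_le_of_ne hA0 (Ne.symm hAz)
      have hBpos : 0 < B := lt_of_le_of_ne hB0 (Ne.symm hBz)
      set c := Real.sqrt B / Real.sqrt A with hc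
      have hcpos : 0 < c := div_pos (Real.sqrt_pos.mpr hBpos) (Real.sqrt_pos.mpr hApos)
      set d := c⁻¹ with hd
      have hdpos : 0 < d := inv_pos.mpr hcpos
      have hcd : c * d = 1 := mul_inv_cancel₀ (ne_of_gt hcpos)
      have key : ∫ t, f t * g t ∂μ ≤ (c * A + d * B) / 2 := by
        have hint : Integrable (fun t => (c * f t ^ 2 + d * g t ^ 2) / 2) μ :=
          (((hf2.const_mul c).add (hg2.const_mul d)).div_const 2)
        have hmono : ∀ᵐ t ∂μ, f t * g t ≤ (c * f t ^ 2 + d * g t ^ 2) / 2 := by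
          filter_upwards with t
          nlinarith [mul_nonneg hdpos.le (sq_nonneg (c * f t - g t)), hcd, hcpos, hdpos]
        calc ∫ t, f t * g t ∂μ ≤ ∫ t, (c * f t ^ 2 + d * g t ^ 2) / 2 ∂μ :=
              integral_mono_ae hfg hint hmono
          _ = (c * A + d * B) / 2 := by
              rw [integral_div, integral_add (hf2.const_mul c) (hg2.const_mul d),
                integral_const_mul, integral_const_mul]
      have heq : (c * A + d * B) / 2 = Real.sqrt A * Real.sqrt B := by
        have hmsA : Real.sqrt A * Real.sqrt A = A := Real.mul_self_sqrt hA0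
        have hmsB : Real.sqrt B * Real.sqrt B = B := Real.mul_self_sqrt hB0
        have h1 : (0:ℝ) < Real.sqrt A := Real.sqrt_pos.mpr hApos
        have h2 : (0:ℝ) < Real.sqrt B := Real.sqrt_pos.mpr hBpos
        have e1 : c * A = Real.sqrt B * Real.sqrt A := by
          rw [hc]; field_simp; rw [sq, hmsA]
        have e2 : d * B = Real.sqrt A * Real.sqrt B := by
          rw [hd, hc, inv_div]; field_simp; rw [sq, hmsB]
        rw [e1, e2]; ring
      linarith [key]

set_option maxHeartbeats 2000000 in
/-- Weighted radial Gagliardo–Nirenberg inequality: with weight `σ_ω(s) = 1 + s/√ω` on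
`[-√ω, ∞)`, one has `sup_{s > -√ω} σ_ω(s) v(s)² ≤ C ‖v‖_{L²(σ_ω ds)} ‖v'‖_{L²(σ_ω ds)}`
with a universal constant `C` independent of `ω ≥ 1`. -/
theorem stmt1 :
    ∃ C : ℝ, 0 < C ∧ ∀ (ω : ℝ), 1 ≤ ω → ∀ (v v' : ℝ → ℝ),
      (∀ s ∈ Set.Ici (-Real.sqrt ω), HasDerivAt v (v' s) s) →
      MeasureTheory.IntegrableOn (fun s => v s ^ 2 * (1 + s / Real.sqrt ω))
        (Set.Ici (-Real.sqrt ω)) →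
      MeasureTheory.IntegrableOn (fun s => v' s ^ 2 * (1 + s / Real.sqrt ω))
        (Set.Ici (-Real.sqrt ω)) →
      ∀ s : ℝ, -Real.sqrt ω < s →
        (1 + s / Real.sqrt ω) * (v s) ^ 2 ≤
          C * Real.sqrt (∫ t in Set.Ici (-Real.sqrt ω), v t ^ 2 * (1 + t / Real.sqrt ω)) *
            Real.sqrt (∫ t in Set.Ici (-Real.sqrt ω), v' t ^ 2 * (1 + t / Real.sqrt ω)) := by
  refine ⟨2, by norm_num, ?_⟩
  intro ω hω v v' hv h2 h3 s hs
  set a := Real.sqrt ω with haa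
  have ha1 : (1:ℝ) ≤ a := by
    rw [haa, show (1:ℝ) = Real.sqrt 1 by simp]
    exact Real.sqrt_le_sqrt hω
  have ha0 : (0:ℝ) < a := lt_of_lt_of_le one_pos ha1
  set A := ∫ t in Set.Ici (-a), v t ^ 2 * (1 + t / a) with hAdef
  set B := ∫ t in Set.Ici (-a), v' t ^ 2 * (1 + t / a) with hBdef
  -- weight nonneg on the set
  have hσ0 : ∀ t : ℝ, -a ≤ t → 0 ≤ 1 + t / a := by
    intro t ht
    have : -1 ≤ t / a := by
      rw [neg_le, ← neg_div]
      exact (div_le_one ha0).mpr (by linarith)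
    linarith
  -- continuity/measurability
  have hv_cont : ContinuousOn v (Set.Ici (-a)) := fun t ht =>
    ((hv t ht).continuousAt).continuousWithinAt
  have hv'_eq : ∀ t ∈ Set.Ici (-a), v' t = deriv v t := fun t ht => ((hv t ht).deriv).symm
  have hv'_aesm : ∀ (S : Set ℝ), MeasurableSet S → S ⊆ Set.Ici (-a) →
      AEStronglyMeasurable v' (volume.restrict S) := by
    intro S hS hsub
    refine (measurable_deriv v).aestronglyMeasurable.congr ?_
    filter_upwards [ae_restrict_mem hS] with t ht
    exact (hv'_eq t (hsub ht)).symm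
  have hv_aesm : AEStronglyMeasurable v (volume.restrict (Set.Ici (-a))) :=
    hv_cont.aestronglyMeasurable measurableSet_Ici
  -- integrability of |v v'| σ on the half line
  have habs : IntegrableOn (fun t => |v t * v' t| * (1 + t / a)) (Set.Ici (-a)) := by
    refine Integrable.mono' ((h2.add h3).div_const 2) ?_ ?_
    · have m1 : AEStronglyMeasurable (fun t => v t * v' t) (volume.restrict (Set.Ici (-a))) :=
        hv_aesm.mul (hv'_aesm _ measurableSet_Ici (subset_refl _))
      have m2 : AEStronglyMeasurable (fun t : ℝ => 1 + t / a)
          (volume.restrict (Set.Ici (-a))) :=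
        (continuous_const.add (continuous_id.div_const a)).aestronglyMeasurable
      exact (m1.norm.mul m2).congr (Filter.Eventually.of_forall fun t => by
        simp [Real.norm_eq_abs, abs_mul])
    · filter_upwards [ae_restrict_mem measurableSet_Ici] with t ht
      have hσ := hσ0 t ht
      have h1 : |v t * v' t| ≤ (v t ^ 2 + v' t ^ 2) / 2 := by
        rw [abs_mul]
        nlinarith [sq_nonneg (|v t| - |v' t|), sq_abs (v t), sq_abs (v' t),
          abs_nonneg (v t), abs_nonneg (v' t)]
      rw [Real.norm_eq_abs, abs_of_nonneg (mul_nonneg (abs_nonneg _) hσ)]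
      simp only [Pi.add_apply]
      calc |v t * v' t| * (1 + t / a) ≤ (v t ^ 2 + v' t ^ 2) / 2 * (1 + t / a) :=
            mul_le_mul_of_nonneg_right h1 hσ
        _ = (v t ^ 2 * (1 + t / a) + v' t ^ 2 * (1 + t / a)) / 2 := by ring
  -- Cauchy-Schwarz
  have hCS : ∫ t in Set.Ici (-a), |v t * v' t| * (1 + t / a) ≤ Real.sqrt A * Real.sqrt B := by
    set f : ℝ → ℝ := fun t => |v t| * Real.sqrt (1 + t / a) with hf
    set g : ℝ → ℝ := fun t => |v' t| * Real.sqrt (1 + t / a) with hg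
    have hfeq : (fun t => f t ^ 2) =ᵐ[volume.restrict (Set.Ici (-a))]
        (fun t => v t ^ 2 * (1 + t / a)) := by
      filter_upwards [ae_restrict_mem measurableSet_Ici] with t ht
      rw [hf]
      simp only [mul_pow, sq_abs, Real.sq_sqrt (hσ0 t ht)]
    have hgeq : (fun t => g t ^ 2) =ᵐ[volume.restrict (Set.Ici (-a))]
        (fun t => v' t ^ 2 * (1 + t / a)) := by
      filter_upwards [ae_restrict_mem measurableSet_Ici] with t ht
      rw [hg]
      simp only [mul_pow, sq_abs, Real.sq_sqrt (hσ0 t ht)]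
    have hfgeq : (fun t => f t * g t) =ᵐ[volume.restrict (Set.Ici (-a))]
        (fun t => |v t * v' t| * (1 + t / a)) := by
      filter_upwards [ae_restrict_mem measurableSet_Ici] with t ht
      rw [hf, hg, abs_mul]
      rw [mul_mul_mul_comm, Real.mul_self_sqrt (hσ0 t ht)]
    have hf2 : Integrable (fun t => f t ^ 2) (volume.restrict (Set.Ici (-a))) :=
      h2.congr hfeq.symm
    have hg2 : Integrable (fun t => g t ^ 2) (volume.restrict (Set.Ici (-a))) :=
      h3.congr hgeq.symm
    have hfg : Integrable (fun t => f t * g t) (volume.restrict (Set.Ici (-a))) :=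
      habs.congr hfgeq.symm
    calc ∫ t in Set.Ici (-a), |v t * v' t| * (1 + t / a)
        = ∫ t in Set.Ici (-a), f t * g t := (integral_congr_ae hfgeq).symm
      _ ≤ Real.sqrt (∫ t in Set.Ici (-a), f t ^ 2) * Real.sqrt (∫ t in Set.Ici (-a), g t ^ 2) :=
          cs_aux hf2 hg2 hfg
      _ = Real.sqrt A * Real.sqrt B := by
          rw [integral_congr_ae hfeq, integral_congr_ae hgeq]
  -- derivative of F
  set F : ℝ → ℝ := fun t => (1 + t / a) * v t ^ 2 with hFdef
  set F' : ℝ → ℝ := fun t => v t ^ 2 / a + (1 + t / a) * (2 * v t * v' t) with hF'def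
  have hF : ∀ t ∈ Set.Ici (-a), HasDerivAt F (F' t) t := by
    intro t ht
    have hd1 : HasDerivAt (fun x : ℝ => 1 + x / a) (1 / a) t := by
      simpa using ((hasDerivAt_id t).div_const a).const_add 1
    have hd2 : HasDerivAt (fun x => v x ^ 2) (2 * v t * v' t) t := by
      have := (hv t ht).fun_pow 2
      simpa [mul_comm] using this
    have := hd1.fun_mul hd2
    refine this.congr_deriv ?_
    rw [hF'def]; ring
  -- key estimate
  have key : ∀ b, s ≤ b → F s ≤ F b + 2 * (Real.sqrt A * Real.sqrt B) := by
    intro b hb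
    have hsub1 : Set.Ioc s b ⊆ Set.Ici (-a) := fun t ht => le_trans hs.le ht.1.le
    have hsub2 : Set.Icc s b ⊆ Set.Ici (-a) := fun t ht => le_trans hs.le ht.1
    -- bound on v on [s,b]
    obtain ⟨M, hM⟩ := (isCompact_Icc (a := s) (b := b)).exists_bound_of_continuousOn
      (hv_cont.mono hsub2)
    have hM0 : 0 ≤ M := le_trans (norm_nonneg (v s)) (hM s ⟨le_refl s, hb⟩)
    -- integrability of v'^2 on Ioc s b
    have hδ : (0:ℝ) < 1 + s / a := by
      have : -1 < s / a := by
        rw [neg_lt, ← neg_div]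
        exact (div_lt_one ha0).mpr (by linarith)
      linarith
    have hv'2 : IntegrableOn (fun t => v' t ^ 2) (Set.Ioc s b) := by
      refine Integrable.mono' ((h3.mono_set hsub1).div_const (1 + s / a)) ?_ ?_
      · exact ((hv'_aesm _ measurableSet_Ioc hsub1).mul
          (hv'_aesm _ measurableSet_Ioc hsub1)).congr
          (Filter.Eventually.of_forall fun t => (pow_two (v' t)).symm)
      · filter_upwards [ae_restrict_mem measurableSet_Ioc] with t ht
        have hσt : 1 + s / a ≤ 1 + t / a := by
          have hst := ht.1.le
          gcongr
        rw [Real.norm_eq_abs, abs_of_nonneg (sq_nonneg _)]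
        rw [le_div_iff₀ hδ]
        nlinarith [sq_nonneg (v' t)]
    -- interval integrability of F'
    have hvS : AEStronglyMeasurable v (volume.restrict (Set.Ioc s b)) :=
      (hv_cont.mono hsub1).aestronglyMeasurable measurableSet_Ioc
    have hv'S : AEStronglyMeasurable v' (volume.restrict (Set.Ioc s b)) :=
      hv'_aesm _ measurableSet_Ioc hsub1
    have hsqS : AEStronglyMeasurable (fun t => v t ^ 2) (volume.restrict (Set.Ioc s b)) :=
      (hvS.mul hvS).congr (Filter.Eventually.of_forall fun t => (pow_two (v t)).symm)
    have hF'aesm : AEStronglyMeasurable F' (volume.restrict (Set.Ioc s b)) := by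
      rw [hF'def]
      refine AEStronglyMeasurable.add ?_ ?_
      · exact (hsqS.mul_const a⁻¹).congr
          (Filter.Eventually.of_forall fun t => (div_eq_mul_inv (v t ^ 2) a).symm)
      · exact ((continuous_const.add (continuous_id.div_const a)).aestronglyMeasurable).mul
          ((hvS.const_mul 2).mul hv'S)
    have hF'int : IntervalIntegrable F' volume s b := by
      rw [intervalIntegrable_iff_integrableOn_Ioc_of_le hb]
      have hbnd : Integrable (fun t => M ^ 2 / a + (1 + b / a) * M * (1 + v' t ^ 2))
          (volume.restrict (Set.Ioc s b)) :=
        (integrable_const _).add (((integrable_const (1:ℝ)).add hv'2).const_mul _)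
      refine Integrable.mono' hbnd hF'aesm ?_
      filter_upwards [ae_restrict_mem measurableSet_Ioc] with t ht
      have htmem : t ∈ Set.Icc s b := ⟨ht.1.le, ht.2⟩
      have hvt : |v t| ≤ M := hM t htmem
      have hσt0 : 0 ≤ 1 + t / a := hσ0 t (hsub1 ht)
      have hσtb : 1 + t / a ≤ 1 + b / a := by
        have hb2 := ht.2
        gcongr
      have hσb0 : (0:ℝ) ≤ 1 + b / a := le_trans hσt0 hσtb
      have h2v' : 2 * |v' t| ≤ 1 + v' t ^ 2 := by
        nlinarith [sq_nonneg (|v' t| - 1), sq_abs (v' t), abs_nonneg (v' t)]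
      rw [Real.norm_eq_abs, hF'def]
      have hb1 : |v t ^ 2 / a| ≤ M ^ 2 / a := by
        rw [abs_div, abs_of_pos ha0, abs_of_nonneg (sq_nonneg _)]
        have hMsq : v t ^ 2 ≤ M ^ 2 := by nlinarith [sq_abs (v t), abs_nonneg (v t)]
        gcongr
      have hb2 : |(1 + t / a) * (2 * v t * v' t)| ≤ (1 + b / a) * M * (1 + v' t ^ 2) := by
        rw [abs_mul, abs_of_nonneg hσt0]
        have : |2 * v t * v' t| = 2 * |v t| * |v' t| := by
          rw [abs_mul, abs_mul]; simp [abs_of_nonneg, mul_assoc]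
        rw [this]
        calc (1 + t / a) * (2 * |v t| * |v' t|)
            ≤ (1 + b / a) * (M * (2 * |v' t|)) := by
              have h1 : 2 * |v t| * |v' t| ≤ M * (2 * |v' t|) := by
                nlinarith [abs_nonneg (v' t), abs_nonneg (v t)]
              exact mul_le_mul hσtb h1 (by positivity) hσb0
          _ ≤ (1 + b / a) * M * (1 + v' t ^ 2) := by
              rw [mul_assoc]
              exact mul_le_mul_of_nonneg_left
                (mul_le_mul_of_nonneg_left h2v' hM0) hσb0
      calc |v t ^ 2 / a + (1 + t / a) * (2 * v t * v' t)|
          ≤ |v t ^ 2 / a| + |(1 + t / a) * (2 * v t * v' t)| := abs_add_le _ _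
        _ ≤ M ^ 2 / a + (1 + b / a) * M * (1 + v' t ^ 2) := add_le_add hb1 hb2
    -- FTC
    have hftc : ∫ t in s..b, F' t = F b - F s :=
      intervalIntegral.integral_eq_sub_of_hasDerivAt
        (fun t ht => hF t (by
          rw [Set.uIcc_of_le hb] at ht
          exact le_trans hs.le ht.1)) hF'int
    -- compare -F' with 2|v v'|σ on [s,b]
    set G : ℝ → ℝ := fun t => 2 * (|v t * v' t| * (1 + t / a)) with hGdef
    have hGint : IntegrableOn G (Set.Ici (-a)) := habs.const_mul 2
    have hGii : IntervalIntegrable G volume s b := by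
      rw [intervalIntegrable_iff_integrableOn_Ioc_of_le hb]
      exact hGint.mono_set hsub1
    have hmono : ∫ t in s..b, -F' t ≤ ∫ t in s..b, G t := by
      refine intervalIntegral.integral_mono_on hb hF'int.neg hGii ?_
      intro t ht
      have htI : t ∈ Set.Ici (-a) := hsub2 ht
      have hσt0 : 0 ≤ 1 + t / a := hσ0 t htI
      simp only [Pi.neg_apply, hF'def, hGdef]
      have h1 : 0 ≤ v t ^ 2 / a := by positivity
      have h2' : -((1 + t / a) * (2 * v t * v' t)) ≤ (1 + t / a) * (2 * |v t * v' t|) := by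
        have : -(2 * v t * v' t) ≤ 2 * |v t * v' t| := by
          have := neg_abs_le (v t * v' t)
          nlinarith [abs_nonneg (v t * v' t)]
        nlinarith [mul_le_mul_of_nonneg_left this hσt0]
      nlinarith [h1, h2']
    have hGmono : ∫ t in s..b, G t ≤ 2 * (Real.sqrt A * Real.sqrt B) := by
      rw [intervalIntegral.integral_of_le hb]
      calc ∫ t in Set.Ioc s b, G t ≤ ∫ t in Set.Ici (-a), G t := by
            refine setIntegral_mono_set hGint ?_ (HasSubset.Subset.eventuallyLE hsub1)
            filter_upwards [ae_restrict_mem measurableSet_Ici] with t ht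
            have := hσ0 t ht
            rw [hGdef]
            positivity
        _ ≤ 2 * (Real.sqrt A * Real.sqrt B) := by
            rw [hGdef]
            rw [integral_const_mul]
            linarith [hCS]
    have : -(F b - F s) ≤ 2 * (Real.sqrt A * Real.sqrt B) := by
      rw [← hftc, ← intervalIntegral.integral_neg]
      exact le_trans hmono hGmono
    linarith
  -- smallness of F at infinity
  have hsmall : ∀ ε : ℝ, 0 < ε → ∃ b, s ≤ b ∧ F b < ε := by
    intro ε hε
    by_contra hcon
    push_neg at hcon
    have hFi : IntegrableOn F (Set.Ici s) := by
      refine (h2.mono_set (Set.Ici_subset_Ici.mpr hs.le)).congr ?_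
      exact Filter.Eventually.of_forall fun t => by rw [hFdef]; ring
    have hconst : Integrable (fun _ : ℝ => ε) (volume.restrict (Set.Ici s)) := by
      refine Integrable.mono' hFi aestronglyMeasurable_const ?_
      filter_upwards [ae_restrict_mem measurableSet_Ici] with t ht
      rw [Real.norm_eq_abs, abs_of_pos hε]
      exact hcon t ht
    rcases integrable_const_iff.mp hconst with h | h
    · exact absurd h (ne_of_gt hε)
    · have h' := h.measure_univ_lt_top
      rw [Measure.restrict_apply_univ, Real.volume_Ici] at h'
      exact absurd h' (by simp)
  -- conclude
  have hfinal : F s ≤ 2 * (Real.sqrt A * Real.sqrt B) := by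
    refine le_of_forall_pos_le_add ?_
    intro ε hε
    obtain ⟨b, hb, hFb⟩ := hsmall ε hε
    have := key b hb
    linarith
  calc (1 + s / a) * v s ^ 2 = F s := by rw [hFdef]
    _ ≤ 2 * (Real.sqrt A * Real.sqrt B) := hfinal
    _ = 2 * Real.sqrt A * Real.sqrt B := by ring
end

section
/- Let $\kappa = -1$ and $0 < m \leq 2\pi^2$. Then the constant function $Q_\infty \equiv \sqrt{m/(2\pi)}$ minimizes the focusing energy $E_\infty[w] = \tfrac{1}{2}\|w'\|_{L^2(\mathbb{S}^1)}^2 - \tfrac{1}{8\pi}\|w\|_{L^4(\mathbb{S}^1)}^4$ among $w \in H^1(\mathbb{S}^1)$ with $\|w\|_{L^2(\mathbb{S}^1)}^2 = m$, and it solves $-Q_\infty'' - \frac{1}{2\pi}Q_\infty^3 = -\mu_\infty Q_\infty$ with $\mu_\infty = \frac{m}{(2\pi)^2}$. -/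
open Real MeasureTheory intervalIntegral Set

private lemma two_pi_pos' : (0:ℝ) < 0 + 2 * Real.pi := by
  have := Real.pi_pos; linarith

private lemma fact_two_pi : Fact ((0:ℝ) < 2 * Real.pi) := ⟨by have := Real.pi_pos; linarith⟩

attribute [local instance] fact_two_pi

/-- Cauchy–Schwarz for interval integrals of continuous functions. -/
private lemma cs_int {u v : ℝ → ℝ} (hu : Continuous u) (hv : Continuous v) {a b : ℝ}
    (hab : a ≤ b) :
    (∫ x in a..b, u x * v x) ^ 2 ≤ (∫ x in a..b, u x ^ 2) * (∫ x in a..b, v x ^ 2) := by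
  set A := ∫ x in a..b, v x ^ 2 with hA
  set B := ∫ x in a..b, u x * v x with hB
  set C := ∫ x in a..b, u x ^ 2 with hC
  have key : ∀ t : ℝ, 0 ≤ A * (t * t) + (2 * B) * t + C := by
    intro t
    have hI1 : IntervalIntegrable (fun x => t * t * v x ^ 2) volume a b :=
      (continuous_const.mul (hv.pow 2)).intervalIntegrable _ _
    have hI2 : IntervalIntegrable (fun x => 2 * (u x * v x) * t) volume a b :=
      ((continuous_const.mul (hu.mul hv)).mul continuous_const).intervalIntegrable _ _
    have hI3 : IntervalIntegrable (fun x => u x ^ 2) volume a b :=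
      (hu.pow 2).intervalIntegrable _ _
    have h2 : (0:ℝ) ≤ ∫ x in a..b, (t * v x + u x) ^ 2 :=
      intervalIntegral.integral_nonneg hab (fun x _ => sq_nonneg _)
    have h1 : (fun x => (t * v x + u x) ^ 2)
        = fun x => t * t * v x ^ 2 + 2 * (u x * v x) * t + u x ^ 2 := by
      funext x; ring
    rw [h1] at h2
    rw [intervalIntegral.integral_add (hI1.add hI2) hI3,
        intervalIntegral.integral_add hI1 hI2,
        intervalIntegral.integral_const_mul, intervalIntegral.integral_mul_const,
        intervalIntegral.integral_const_mul] at h2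
    calc (0:ℝ) ≤ t * t * A + 2 * B * t + C := h2
      _ = A * (t * t) + (2 * B) * t + C := by ring
  have hd := discrim_le_zero key
  rw [discrim] at hd
  nlinarith [hd]

/-- Parseval / Bessel data for a continuous `2π`-periodic complex function. -/
private lemma parseval_aux {h : ℝ → ℂ} (hc : Continuous h)
    (hper : Function.Periodic h (2 * Real.pi)) :
    Summable (fun n : ℤ => ‖fourierCoeffOn two_pi_pos' h n‖ ^ 2) ∧
      ∑' n : ℤ, ‖fourierCoeffOn two_pi_pos' h n‖ ^ 2
        = (1 / (2 * Real.pi)) * ∫ x in (0:ℝ)..(2 * Real.pi), ‖h x‖ ^ 2 := by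
  have hπ : (0:ℝ) < 2 * Real.pi := by have := Real.pi_pos; linarith
  have hΦc : Continuous (AddCircle.liftIco (2 * Real.pi) 0 h) :=
    AddCircle.liftIco_continuous ((hper 0).symm) hc.continuousOn
  set Φ : C(AddCircle (2 * Real.pi), ℂ) := ⟨AddCircle.liftIco (2 * Real.pi) 0 h, hΦc⟩ with hΦ
  set fL := ContinuousMap.toLp (E := ℂ) 2 AddCircle.haarAddCircle ℂ Φ with hfL
  have hcoeff : ∀ n : ℤ, fourierCoeff (fL : AddCircle (2 * Real.pi) → ℂ) n
      = fourierCoeffOn two_pi_pos' h n := by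
    intro n
    rw [hfL, fourierCoeff_toLp]
    exact fourierCoeff_liftIco_eq h n
  -- pointwise values of Φ on [0, 2π]
  have hΦval : ∀ x ∈ Set.uIcc (0:ℝ) (2 * Real.pi), ‖Φ (x:ℝ)‖ ^ 2 = ‖h x‖ ^ 2 := by
    intro x hx
    rw [Set.uIcc_of_le hπ.le] at hx
    rcases lt_or_eq_of_le hx.2 with hlt | heq
    · have hmem : x ∈ Set.Ico (0:ℝ) (0 + 2 * Real.pi) := by
        constructor
        · exact hx.1
        · rw [zero_add]; exact hlt
      rw [hΦ]
      simp only [ContinuousMap.coe_mk]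
      rw [AddCircle.liftIco_coe_apply hmem]
    · have h1 : ((x : ℝ) : AddCircle (2 * Real.pi)) = ((0:ℝ) : AddCircle (2 * Real.pi)) := by
        rw [heq]
        exact_mod_cast AddCircle.coe_period (2 * Real.pi)
      have hmem : (0:ℝ) ∈ Set.Ico (0:ℝ) (0 + 2 * Real.pi) := by
        constructor
        · exact le_refl 0
        · rw [zero_add]; exact hπ
      rw [hΦ]
      simp only [ContinuousMap.coe_mk]
      rw [h1, AddCircle.liftIco_coe_apply hmem]
      have : h x = h 0 := by rw [heq]; simpa using hper 0
      rw [this]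
  -- the integral identity
  have hint : ∫ t : AddCircle (2 * Real.pi), ‖Φ t‖ ^ 2 ∂AddCircle.haarAddCircle
      = (1 / (2 * Real.pi)) * ∫ x in (0:ℝ)..(2 * Real.pi), ‖h x‖ ^ 2 := by
    have hvol : ∫ t : AddCircle (2 * Real.pi), ‖Φ t‖ ^ 2
        = (2 * Real.pi) * ∫ t : AddCircle (2 * Real.pi), ‖Φ t‖ ^ 2 ∂AddCircle.haarAddCircle := by
      rw [AddCircle.volume_eq_smul_haarAddCircle, MeasureTheory.integral_smul_measure,
        ENNReal.toReal_ofReal hπ.le, smul_eq_mul]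
    have hpre := AddCircle.intervalIntegral_preimage (2 * Real.pi) 0
      (fun t : AddCircle (2 * Real.pi) => ‖Φ t‖ ^ 2)
    rw [zero_add] at hpre
    have hcong : ∫ x in (0:ℝ)..(2 * Real.pi), ‖Φ (x:ℝ)‖ ^ 2
        = ∫ x in (0:ℝ)..(2 * Real.pi), ‖h x‖ ^ 2 :=
      intervalIntegral.integral_congr hΦval
    rw [← hcong, hpre, hvol]
    field_simp
  have hpars := tsum_sq_fourierCoeff fL
  have hae : (fL : AddCircle (2 * Real.pi) → ℂ) =ᵐ[AddCircle.haarAddCircle] ⇑Φ :=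
    ContinuousMap.coeFn_toLp _ _
  have hint2 : ∫ t : AddCircle (2 * Real.pi), ‖(fL : AddCircle (2 * Real.pi) → ℂ) t‖ ^ 2
      ∂AddCircle.haarAddCircle = ∫ t : AddCircle (2 * Real.pi), ‖Φ t‖ ^ 2
      ∂AddCircle.haarAddCircle :=
    integral_congr_ae (hae.mono fun x hx => by simp only [hx])
  constructor
  · have hsum : Summable fun n : ℤ => ‖fourierBasis.repr fL n‖ ^ ((2:ENNReal).toReal) :=
      (lp.memℓp (fourierBasis.repr fL)).summable (by norm_num)
    have : (fun n : ℤ => ‖fourierBasis.repr fL n‖ ^ ((2:ENNReal).toReal))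
        = fun n : ℤ => ‖fourierCoeffOn two_pi_pos' h n‖ ^ 2 := by
      funext n
      rw [fourierBasis_repr, hcoeff n]
      norm_num
    rwa [this] at hsum
  · calc ∑' n : ℤ, ‖fourierCoeffOn two_pi_pos' h n‖ ^ 2
        = ∑' n : ℤ, ‖fourierCoeff (fL : AddCircle (2 * Real.pi) → ℂ) n‖ ^ 2 := by
          congr 1; funext n; rw [hcoeff n]
      _ = ∫ t : AddCircle (2 * Real.pi), ‖(fL : AddCircle (2 * Real.pi) → ℂ) t‖ ^ 2
          ∂AddCircle.haarAddCircle := hpars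
      _ = (1 / (2 * Real.pi)) * ∫ x in (0:ℝ)..(2 * Real.pi), ‖h x‖ ^ 2 := by
          rw [hint2, hint]
open Complex in
private lemma wirtinger {g g' : ℝ → ℝ} (hper : Function.Periodic g (2 * Real.pi))
    (hd : ∀ x, HasDerivAt g (g' x) x) (hc' : Continuous g')
    (hmean : (∫ x in (0:ℝ)..(2 * Real.pi), g x) = 0) :
    (∫ x in (0:ℝ)..(2 * Real.pi), g x ^ 2) ≤ ∫ x in (0:ℝ)..(2 * Real.pi), g' x ^ 2 := by
  have hπ : (0:ℝ) < 2 * Real.pi := by have := Real.pi_pos; linarith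
  have hgc : Continuous g := by
    rw [continuous_iff_continuousAt]; exact fun x => (hd x).continuousAt
  have hper' : Function.Periodic g' (2 * Real.pi) := by
    intro x
    have h1 : HasDerivAt (fun y : ℝ => g (y + 2 * Real.pi)) (g' (x + 2 * Real.pi) * 1) x :=
      (hd (x + 2 * Real.pi)).comp x ((hasDerivAt_id x).add_const (2 * Real.pi))
    have h2 : (fun y : ℝ => g (y + 2 * Real.pi)) = g := funext fun y => hper y
    rw [h2, mul_one] at h1
    exact h1.unique (hd x)
  set gC : ℝ → ℂ := fun x => (g x : ℂ) with hgC
  set g'C : ℝ → ℂ := fun x => (g' x : ℂ) with hg'C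
  have hdC : ∀ x, HasDerivAt gC (g'C x) x := fun x => (hd x).ofReal_comp
  have hcC : Continuous gC := Complex.continuous_ofReal.comp hgc
  have hc'C : Continuous g'C := Complex.continuous_ofReal.comp hc'
  have hperC : Function.Periodic gC (2 * Real.pi) := fun x => by simp [hgC, hper x]
  have hper'C : Function.Periodic g'C (2 * Real.pi) := fun x => by simp [hg'C, hper' x]
  set c : ℤ → ℂ := fun n => fourierCoeffOn two_pi_pos' gC n with hc
  set c' : ℤ → ℂ := fun n => fourierCoeffOn two_pi_pos' g'C n with hc'def
  -- the zero coefficient vanishes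
  have hc0 : c 0 = 0 := by
    rw [hc]
    simp only
    rw [fourierCoeffOn_eq_integral]
    simp only [neg_zero, fourier_zero, one_smul, zero_add, sub_zero]
    rw [hgC]
    rw [intervalIntegral.integral_ofReal, hmean]
    simp
  -- coefficient comparison
  have hcmp : ∀ n : ℤ, ‖c n‖ ^ 2 ≤ ‖c' n‖ ^ 2 := by
    intro n
    rcases eq_or_ne n 0 with rfl | hn
    · rw [hc0]; simp [sq_nonneg]
    · have key := fourierCoeffOn_of_hasDerivAt two_pi_pos' hn
        (fun x _ => hdC x) (hc'C.intervalIntegrable 0 (0 + 2 * Real.pi))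
      have h0 : gC (0 + 2 * Real.pi) - gC 0 = 0 := by
        rw [hgC]; simp only; rw [hper 0]; ring
      rw [h0, mul_zero, zero_sub] at key
      -- key : c n = 1 / (-2πIn) * (-(b - a) * c' n)
      have hIn : (Complex.I * n) ≠ 0 := by
        simp [Complex.I_ne_zero, Complex.ext_iff]
        exact_mod_cast hn
      have hπC : ((Real.pi : ℂ)) ≠ 0 := by
        exact_mod_cast Real.pi_ne_zero
      have hnC : ((n : ℂ)) ≠ 0 := Int.cast_ne_zero.mpr hn
      have hval : c' n = Complex.I * n * c n := by
        rw [hc, hc'def]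
        simp only
        rw [key]
        push_cast
        field_simp
        ring
      have hnorm : ‖c' n‖ = |(n:ℝ)| * ‖c n‖ := by
        rw [hval, norm_mul, norm_mul, Complex.norm_I, one_mul]
        norm_cast
      have h1n : (1:ℝ) ≤ |(n:ℝ)| := by
        rw [← Int.cast_abs]
        exact_mod_cast Int.one_le_abs (by exact hn)
      have : ‖c n‖ ≤ ‖c' n‖ := by
        rw [hnorm]
        nlinarith [norm_nonneg (c n)]
      exact pow_le_pow_left₀ (norm_nonneg _) this 2
  obtain ⟨hsumg, htsumg⟩ := parseval_aux hcC hperC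
  obtain ⟨hsumg', htsumg'⟩ := parseval_aux hc'C hper'C
  have hle := Summable.tsum_le_tsum hcmp hsumg hsumg'
  rw [htsumg, htsumg'] at hle
  have hgsq : (∫ x in (0:ℝ)..(2 * Real.pi), ‖gC x‖ ^ 2) = ∫ x in (0:ℝ)..(2 * Real.pi), g x ^ 2 := by
    apply intervalIntegral.integral_congr
    intro x _
    rw [hgC]; simp only [Complex.norm_real]
    rw [Real.norm_eq_abs, _root_.sq_abs]
  have hg'sq : (∫ x in (0:ℝ)..(2 * Real.pi), ‖g'C x‖ ^ 2) = ∫ x in (0:ℝ)..(2 * Real.pi), g' x ^ 2 := by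
    apply intervalIntegral.integral_congr
    intro x _
    rw [hg'C]; simp only [Complex.norm_real]
    rw [Real.norm_eq_abs, _root_.sq_abs]
  rw [hgsq, hg'sq] at hle
  have := mul_le_mul_of_nonneg_left hle (le_of_lt hπ)
  calc (∫ x in (0:ℝ)..(2 * Real.pi), g x ^ 2)
      = (2 * Real.pi) * ((1 / (2 * Real.pi)) * ∫ x in (0:ℝ)..(2 * Real.pi), g x ^ 2) := by
        field_simp
    _ ≤ (2 * Real.pi) * ((1 / (2 * Real.pi)) * ∫ x in (0:ℝ)..(2 * Real.pi), g' x ^ 2) := this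
    _ = ∫ x in (0:ℝ)..(2 * Real.pi), g' x ^ 2 := by field_simp
set_option maxHeartbeats 1000000 in
private lemma key_bound {w w' : ℝ → ℝ} {m : ℝ} (hm : 0 < m) (hm2 : m ≤ 2 * Real.pi ^ 2)
    (hper : Function.Periodic w (2 * Real.pi)) (hd : ∀ x, HasDerivAt w (w' x) x)
    (hc' : Continuous w')
    (hmass : (∫ x in (0:ℝ)..(2 * Real.pi), w x ^ 2) = m) :
    (∫ x in (0:ℝ)..(2 * Real.pi), w x ^ 4)
      ≤ 4 * Real.pi * (∫ x in (0:ℝ)..(2 * Real.pi), w' x ^ 2) + m ^ 2 / (2 * Real.pi) := by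
  have hπ : (0:ℝ) < Real.pi := Real.pi_pos
  have h2π : (0:ℝ) < 2 * Real.pi := by linarith
  have hwc : Continuous w := by
    rw [continuous_iff_continuousAt]; exact fun x => (hd x).continuousAt
  set a : ℝ := m / (2 * Real.pi) with ha
  have ha0 : 0 < a := by positivity
  have haπ : a ≤ Real.pi := by
    rw [ha, div_le_iff₀ h2π]; nlinarith
  set f : ℝ → ℝ := fun x => w x ^ 2 - a with hf
  set f' : ℝ → ℝ := fun x => 2 * w x * w' x with hf'
  have hfd : ∀ x, HasDerivAt f (f' x) x := by
    intro x
    have h1 := ((hd x).pow 2).sub_const a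
    have h2 : ((2:ℕ):ℝ) * w x ^ (2 - 1) * w' x = f' x := by
      rw [hf']; push_cast; ring
    rw [h2] at h1
    exact h1
  have hfc : Continuous f := (hwc.pow 2).sub continuous_const
  have hf'c : Continuous f' := (continuous_const.mul hwc).mul hc'
  have hfper : Function.Periodic f (2 * Real.pi) := fun x => by
    simp only [hf]; rw [hper x]
  have hfint : (∫ x in (0:ℝ)..(2 * Real.pi), f x) = 0 := by
    simp only [hf]
    rw [intervalIntegral.integral_sub (f := fun x => w x ^ 2) ((hwc.pow 2).intervalIntegrable _ _)
      (intervalIntegrable_const), hmass, intervalIntegral.integral_const, smul_eq_mul, ha]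
    field_simp
    ring
  set F : ℝ → ℝ := fun x => ∫ t in (0:ℝ)..x, f t with hF
  have hFd : ∀ x, HasDerivAt F (f x) x := fun x =>
    intervalIntegral.integral_hasDerivAt_right (hfc.intervalIntegrable _ _)
      (hfc.stronglyMeasurableAtFilter _ _) hfc.continuousAt
  have hFc : Continuous F := by
    rw [continuous_iff_continuousAt]; exact fun x => (hFd x).continuousAt
  have hFper : Function.Periodic F (2 * Real.pi) := by
    intro x
    have h1 : (∫ t in (0:ℝ)..x, f t) + (∫ t in x..(x + 2 * Real.pi), f t)
        = ∫ t in (0:ℝ)..(x + 2 * Real.pi), f t :=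
      intervalIntegral.integral_add_adjacent_intervals (hfc.intervalIntegrable _ _)
        (hfc.intervalIntegrable _ _)
    have h2 : (∫ t in x..(x + 2 * Real.pi), f t) = ∫ t in (0:ℝ)..(0 + 2 * Real.pi), f t :=
      hfper.intervalIntegral_add_eq x 0
    rw [zero_add] at h2
    simp only [hF]
    rw [← h1, h2, hfint, add_zero]
  set b₀ : ℝ := (∫ x in (0:ℝ)..(2 * Real.pi), F x) / (2 * Real.pi) with hb₀
  set G : ℝ → ℝ := fun x => F x - b₀ with hG
  have hGd : ∀ x, HasDerivAt G (f x) x := fun x => (hFd x).sub_const _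
  have hGc : Continuous G := hFc.sub continuous_const
  have hGper : Function.Periodic G (2 * Real.pi) := fun x => by
    simp only [hG]; rw [hFper x]
  have hGmean : (∫ x in (0:ℝ)..(2 * Real.pi), G x) = 0 := by
    simp only [hG]
    rw [intervalIntegral.integral_sub (hFc.intervalIntegrable _ _) intervalIntegrable_const,
      intervalIntegral.integral_const, smul_eq_mul, hb₀]
    field_simp
    ring
  -- Wirtinger inequality applied to G
  have hW : (∫ x in (0:ℝ)..(2 * Real.pi), G x ^ 2) ≤ ∫ x in (0:ℝ)..(2 * Real.pi), f x ^ 2 :=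
    wirtinger hGper hGd hfc hGmean
  set S : ℝ := ∫ x in (0:ℝ)..(2 * Real.pi), f x ^ 2 with hS
  set X : ℝ := ∫ x in (0:ℝ)..(2 * Real.pi), w' x ^ 2 with hX
  have hS0 : 0 ≤ S := intervalIntegral.integral_nonneg h2π.le (fun x _ => sq_nonneg _)
  have hX0 : 0 ≤ X := intervalIntegral.integral_nonneg h2π.le (fun x _ => sq_nonneg _)
  have hG20 : 0 ≤ ∫ x in (0:ℝ)..(2 * Real.pi), G x ^ 2 :=
    intervalIntegral.integral_nonneg h2π.le (fun x _ => sq_nonneg _)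
  -- Identity 1 : S = -2 ∫ (G w) w'
  have hib : (∫ x in (0:ℝ)..(2 * Real.pi), (f x * f x + G x * f' x))
      = G (2 * Real.pi) * f (2 * Real.pi) - G 0 * f 0 := by
    apply intervalIntegral.integral_eq_sub_of_hasDerivAt (f := fun x => G x * f x)
    · exact fun x _ => (hGd x).mul (hfd x)
    · exact ((hfc.mul hfc).add (hGc.mul hf'c)).intervalIntegrable _ _
  have hGp : G (2 * Real.pi) = G 0 := by have := hGper 0; rwa [zero_add] at this
  have hfp : f (2 * Real.pi) = f 0 := by have := hfper 0; rwa [zero_add] at this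
  rw [hGp, hfp, sub_self] at hib
  rw [intervalIntegral.integral_add (f := fun x => f x * f x) (g := fun x => G x * f' x) ((hfc.mul hfc).intervalIntegrable _ _)
    ((hGc.mul hf'c).intervalIntegrable _ _)] at hib
  have hff : (∫ x in (0:ℝ)..(2 * Real.pi), f x * f x) = S := by
    rw [hS]; apply intervalIntegral.integral_congr; intro x _; ring
  have hGf' : (∫ x in (0:ℝ)..(2 * Real.pi), G x * f' x)
      = 2 * ∫ x in (0:ℝ)..(2 * Real.pi), (G x * w x) * w' x := by
    rw [← intervalIntegral.integral_const_mul]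
    apply intervalIntegral.integral_congr; intro x _
    simp only [hf']; ring
  rw [hff, hGf'] at hib
  -- Identity 2 : ∫ G² f = 0
  have hib2 : (∫ x in (0:ℝ)..(2 * Real.pi), 3 * (G x ^ 2 * f x))
      = G (2 * Real.pi) ^ 3 - G 0 ^ 3 := by
    apply intervalIntegral.integral_eq_sub_of_hasDerivAt (f := fun x => G x ^ 3)
    · intro x _
      have h1 := (hGd x).pow 3
      have h2 : ((3:ℕ):ℝ) * G x ^ (3 - 1) * f x = 3 * (G x ^ 2 * f x) := by push_cast; ring
      rwa [h2] at h1
    · exact (continuous_const.mul ((hGc.pow 2).mul hfc)).intervalIntegrable _ _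
  rw [hGp, sub_self, intervalIntegral.integral_const_mul] at hib2
  have hG2f : (∫ x in (0:ℝ)..(2 * Real.pi), G x ^ 2 * f x) = 0 := by linarith
  -- ∫ (G w)² = a ∫ G²
  have hGW : (∫ x in (0:ℝ)..(2 * Real.pi), (G x * w x) ^ 2)
      = a * (∫ x in (0:ℝ)..(2 * Real.pi), G x ^ 2) := by
    have h1 : (fun x => (G x * w x) ^ 2) = fun x => a * G x ^ 2 + G x ^ 2 * f x := by
      funext x; simp only [hf]; ring
    rw [h1, intervalIntegral.integral_add (f := fun x => a * G x ^ 2) (g := fun x => G x ^ 2 * f x) ((continuous_const.mul (hGc.pow 2)).intervalIntegrable _ _)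
      (((hGc.pow 2).mul hfc).intervalIntegrable _ _), hG2f, add_zero,
      intervalIntegral.integral_const_mul]
  -- Cauchy-Schwarz
  have hCS := cs_int (u := fun x => G x * w x) (hGc.mul hwc) hc' h2π.le
  rw [hGW] at hCS
  -- S² ≤ 4 a S X
  have step : (a * ∫ x in (0:ℝ)..(2 * Real.pi), G x ^ 2) * X ≤ (a * S) * X :=
    mul_le_mul_of_nonneg_right (mul_le_mul_of_nonneg_left hW ha0.le) hX0
  have hSsq : S ^ 2 ≤ 4 * a * S * X := by nlinarith [hCS, step, hib]
  have hfin : S ≤ 4 * a * X := by nlinarith [hSsq, hS0, mul_nonneg (mul_nonneg (by norm_num : (0:ℝ) ≤ 4) ha0.le) hX0]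
  -- P = S + m²/(2π)
  have hP : (∫ x in (0:ℝ)..(2 * Real.pi), w x ^ 4)
      = S + (2 * a * m - 2 * Real.pi * a ^ 2) := by
    have h1 : (fun x => w x ^ 4) = fun x => f x ^ 2 + (2 * a) * w x ^ 2 + -(a ^ 2) := by
      funext x; simp only [hf]; ring
    rw [h1, intervalIntegral.integral_add (f := fun x => f x ^ 2 + (2 * a) * w x ^ 2)
      (((hfc.pow 2).add (continuous_const.mul (hwc.pow 2))).intervalIntegrable _ _)
      intervalIntegrable_const,
      intervalIntegral.integral_add (f := fun x => f x ^ 2) (g := fun x => (2 * a) * w x ^ 2) ((hfc.pow 2).intervalIntegrable _ _)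
      ((continuous_const.mul (hwc.pow 2)).intervalIntegrable _ _),
      intervalIntegral.integral_const_mul, hmass, intervalIntegral.integral_const, smul_eq_mul]
    rw [← hS]; ring
  rw [hP]
  have hid : 2 * a * m - 2 * Real.pi * a ^ 2 = m ^ 2 / (2 * Real.pi) := by
    rw [ha]; field_simp; ring
  rw [hid]
  nlinarith [hfin, hX0, haπ, ha0.le]

/-- Focusing case (`κ = -1`) with `0 < m ≤ 2π²`: the constant `Q_∞ ≡ √(m/(2π))` minimizes
`E[w] = (1/2)‖w'‖² - (1/(8π))‖w‖_{L⁴}⁴` among `w ∈ H¹(S¹)` with `‖w‖_{L²}² = m`, and it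
solves `-Q'' - (1/(2π)) Q³ = -μ_∞ Q` with `μ_∞ = m/(2π)²`. -/
theorem stmt5 (m : ℝ) (hm : 0 < m) (hm2 : m ≤ 2 * Real.pi ^ 2) :
    ∀ (Q : ℝ → ℝ) (μ : ℝ) (Eng : (ℝ → ℝ) → (ℝ → ℝ) → ℝ),
      Q = (fun _ : ℝ => Real.sqrt (m / (2 * Real.pi))) →
      μ = m / (2 * Real.pi) ^ 2 →
      Eng = (fun w w' =>
        (1 / 2) * (∫ θ in (0:ℝ)..(2 * Real.pi), (w' θ) ^ 2) -
        (1 / (8 * Real.pi)) * (∫ θ in (0:ℝ)..(2 * Real.pi), (w θ) ^ 4)) →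
      ((∀ w w' : ℝ → ℝ, Function.Periodic w (2 * Real.pi) →
          (∀ x, HasDerivAt w (w' x) x) → Continuous w' →
          (∫ θ in (0:ℝ)..(2 * Real.pi), (w θ) ^ 2) = m →
          Eng Q (fun _ => 0) ≤ Eng w w') ∧
       (∀ θ : ℝ, -(deriv (deriv Q) θ) - (1 / (2 * Real.pi)) * (Q θ) ^ 3 = -μ * Q θ)) := by
  intro Q μ Eng hQ hμ hEng
  have hπ : (0:ℝ) < Real.pi := Real.pi_pos
  have hc2 : Real.sqrt (m / (2 * Real.pi)) ^ 2 = m / (2 * Real.pi) :=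
    Real.sq_sqrt (by positivity)
  constructor
  · intro w w' hper hd hcw' hmass
    have key := key_bound hm hm2 hper hd hcw' hmass
    rw [hEng, hQ]
    dsimp only
    have h1 : (∫ θ in (0:ℝ)..(2 * Real.pi), (0:ℝ) ^ 2) = 0 := by simp
    have h2 : (∫ θ in (0:ℝ)..(2 * Real.pi), Real.sqrt (m / (2 * Real.pi)) ^ 4)
        = 2 * Real.pi * (m / (2 * Real.pi)) ^ 2 := by
      rw [intervalIntegral.integral_const, smul_eq_mul, sub_zero,
        show Real.sqrt (m / (2 * Real.pi)) ^ 4 = (Real.sqrt (m / (2 * Real.pi)) ^ 2) ^ 2 by ring,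
        hc2]
    rw [h1, h2]
    have e2 : 1 / (8 * Real.pi) * (4 * Real.pi * (∫ θ in (0:ℝ)..(2 * Real.pi), w' θ ^ 2)
          + m ^ 2 / (2 * Real.pi))
        = 1 / 2 * (∫ θ in (0:ℝ)..(2 * Real.pi), w' θ ^ 2) + m ^ 2 / (16 * Real.pi ^ 2) := by
      field_simp; ring
    have e1 : 1 / (8 * Real.pi) * (∫ θ in (0:ℝ)..(2 * Real.pi), w θ ^ 4)
        ≤ 1 / 2 * (∫ θ in (0:ℝ)..(2 * Real.pi), w' θ ^ 2) + m ^ 2 / (16 * Real.pi ^ 2) := by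
      rw [← e2]
      exact mul_le_mul_of_nonneg_left key (by positivity)
    have e3 : (1:ℝ) / 2 * 0 - 1 / (8 * Real.pi) * (2 * Real.pi * (m / (2 * Real.pi)) ^ 2)
        = -(m ^ 2 / (16 * Real.pi ^ 2)) := by
      field_simp; ring
    rw [e3]
    linarith [e1]
  · intro θ
    rw [hQ, hμ]
    have h3 : deriv (deriv (fun _ : ℝ => Real.sqrt (m / (2 * Real.pi)))) θ = 0 := by
      rw [deriv_const']
      exact deriv_const θ 0
    rw [h3]
    have h4 : Real.sqrt (m / (2 * Real.pi)) ^ 3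
        = (m / (2 * Real.pi)) * Real.sqrt (m / (2 * Real.pi)) := by
      rw [pow_succ, hc2]
    rw [h4]
    field_simp
    ring
end
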